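/- Let (X, {d_r}) satisfy the weak d_r-axioms, and equip X with the topology generated by the collection {N_{r,ε}(x) | x ∈ X, r > 0, ε > 0}. Then for every x ∈ X and every r > 0, the function X → [0,∞], y ↦ d_r(x,y), is upper semicontinuous (i.e., for every b, the set {y | d_r(x,y) < b} is open). -/

import Mathlib

open ENNReal

/-- The weak `d_r`-axioms for a family of metric-like functions
`d : ℝ → X → X → ℝ≥0∞` indexed by `r > 0`. -/
structure WeakDr {X : Type*} (d : ℝ → X → X → ℝ≥0∞) : Prop where
  self : ∀ (x : X) (r : ℝ), 0 < r → d r x x = 0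
  mono : ∀ (x y : X) (r₁ r₂ : ℝ), 0 < r₁ → r₁ ≤ r₂ → d r₁ x y ≤ d r₂ x y
  usc : ∀ (x y : X) (r ε : ℝ), 0 < r → 0 < ε → d r x y < ENNReal.ofReal ε →
    ∃ δ : ℝ, 0 < δ ∧ d (r + δ) x y < ENNReal.ofReal ε
  weak_tri : ∀ (x y z : X) (r₁ r₂ r₃ : ℝ), 0 < r₁ → 0 < r₂ → 0 < r₃ →
    d (r₁ + r₂) x y < ENNReal.ofReal r₃ → d (r₁ + r₂ + r₃) y z < ENNReal.ofReal r₂ →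
    d r₁ x z ≤ d (r₁ + r₂) x y + d (r₁ + r₂ + r₃) y z

/-- The basic neighborhood `N_{r,ε}(x) = {y | d_r(x,y) < ε}`. -/
def Nbhd {X : Type*} (d : ℝ → X → X → ℝ≥0∞) (r ε : ℝ) (x : X) : Set X :=
  {y | d r x y < ENNReal.ofReal ε}

/-- The collection `ℬ = {N_{r,ε}(x) | x ∈ X, r > 0, ε > 0}`. -/
def drBasis {X : Type*} (d : ℝ → X → X → ℝ≥0∞) : Set (Set X) :=
  {B | ∃ (x : X) (r ε : ℝ), 0 < r ∧ 0 < ε ∧ B = Nbhd d r ε x}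

theorem stmt_2 {X : Type*} (d : ℝ → X → X → ℝ≥0∞) (h : WeakDr d)
    (x : X) (r : ℝ) (hr : 0 < r) :
    ∀ b : ℝ≥0∞,
      @IsOpen X (TopologicalSpace.generateFrom (drBasis d)) {y | d r x y < b} := by
  intro b
  letI : TopologicalSpace X := TopologicalSpace.generateFrom (drBasis d)
  have key : ∀ y ∈ {y | d r x y < b}, ∃ B ∈ drBasis d, y ∈ B ∧ B ⊆ {y | d r x y < b} := by
    intro y hy
    obtain ⟨c, hc1, hc2⟩ := exists_between (show d r x y < b from hy)
    have hcne : c ≠ ⊤ := (lt_of_lt_of_le hc2 le_top).ne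
    have hc0 : c ≠ 0 := by
      intro h0
      exact absurd hc1 (by simp [h0])
    set α := c.toReal with hα_def
    have hα : 0 < α := ENNReal.toReal_pos hc0 hcne
    have hcα : ENNReal.ofReal α = c := ENNReal.ofReal_toReal hcne
    have hd : d r x y < ENNReal.ofReal α := by rw [hcα]; exact hc1
    obtain ⟨δ, hδ, hδ2⟩ := h.usc x y r α hr hα hd
    have hex : ∃ ρ : ℝ, 0 < ρ ∧ ρ ≤ δ ∧ c + ENNReal.ofReal ρ ≤ b := by
      rcases eq_or_ne b ⊤ with hb | hb
      · exact ⟨δ, hδ, le_refl _, by simp [hb]⟩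
      · refine ⟨min δ (b - c).toReal,
          lt_min hδ (ENNReal.toReal_pos ?_ (ENNReal.sub_ne_top hb)), min_le_left _ _, ?_⟩
        · simpa [tsub_eq_zero_iff_le, not_le] using hc2
        · calc c + ENNReal.ofReal (min δ (b - c).toReal)
              ≤ c + ENNReal.ofReal ((b - c).toReal) :=
                add_le_add le_rfl (ENNReal.ofReal_le_ofReal (min_le_right _ _))
            _ = c + (b - c) := by rw [ENNReal.ofReal_toReal (ENNReal.sub_ne_top hb)]
            _ = b := add_tsub_cancel_of_le hc2.le
    obtain ⟨ρ, hρ, hρδ, hρb⟩ := hex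
    refine ⟨Nbhd d (r + ρ + α) ρ y, ⟨y, r + ρ + α, ρ, by positivity, hρ, rfl⟩, ?_, ?_⟩
    · show d (r + ρ + α) y y < ENNReal.ofReal ρ
      rw [h.self y (r + ρ + α) (by positivity)]
      exact ENNReal.ofReal_pos.mpr hρ
    · intro z hz
      have hz' : d (r + ρ + α) y z < ENNReal.ofReal ρ := hz
      have h1 : d (r + ρ) x y < ENNReal.ofReal α :=
        lt_of_le_of_lt (h.mono x y (r + ρ) (r + δ) (by positivity) (by linarith)) hδ2
      have tri := h.weak_tri x y z r ρ α hr hρ hα h1 hz'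
      show d r x z < b
      calc d r x z ≤ d (r + ρ) x y + d (r + ρ + α) y z := tri
        _ < ENNReal.ofReal α + ENNReal.ofReal ρ := ENNReal.add_lt_add h1 hz'
        _ = c + ENNReal.ofReal ρ := by rw [hcα]
        _ ≤ b := hρb
  have hset : {y | d r x y < b} = ⋃₀ {B | B ∈ drBasis d ∧ B ⊆ {y | d r x y < b}} := by
    ext z
    simp only [Set.mem_sUnion, Set.mem_setOf_eq]
    constructor
    · intro hz
      obtain ⟨B, hB, hzB, hBsub⟩ := key z hz
      exact ⟨B, ⟨hB, hBsub⟩, hzB⟩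
    · rintro ⟨B, ⟨-, hBsub⟩, hzB⟩
      exact hBsub hzB
  rw [hset]
  exact isOpen_sUnion fun B hB => TopologicalSpace.isOpen_generateFrom_of_mem hB.1
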